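/- Let 1 ≤ p ≤ ∞ and let g_1, …, g_L ∈ L¹(ℝ^d). For inputs f_1, …, f_L and h_1, …, h_L in L²(ℝ^d), define F = (∑_{l=1}^L |f_l ∗ g_l|^p)^{1/p} and H = (∑_{l=1}^L |h_l ∗ g_l|^p)^{1/p} (pointwise). Then ‖F − H‖_2² ≤ max(1, L^{2/p − 1}) · ∑_{l=1}^L ‖(f_l − h_l) ∗ g_l‖_2². -/

import Mathlib

open MeasureTheory Real ENNReal
open scoped FourierTransform Convolution

noncomputable section

/-- Convolution of two complex-valued functions on `ℝ^d` w.r.t. Lebesgue measure. -/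
def conv {d : ℕ} (f g : EuclideanSpace ℝ (Fin d) → ℂ) :
    EuclideanSpace ℝ (Fin d) → ℂ :=
  MeasureTheory.convolution f g (ContinuousLinearMap.mul ℂ ℂ) volume

section Aux
open scoped NNReal

lemma aux_sum_rpow_le {ι : Type*} (s : Finset ι) (x : ι → ℝ≥0) {q : ℝ} (hq : 1 ≤ q) :
    ∑ i ∈ s, x i ^ q ≤ (∑ i ∈ s, x i) ^ q := by
  have hq0 : q ≠ 0 := by positivity
  have h1 : q - 1 + 1 = q := by ring
  have key : ∀ y : ℝ≥0, y ^ q = y ^ (q - 1) * y := fun y => by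
    conv_lhs => rw [← h1, NNReal.rpow_add' (by rw [h1]; exact hq0) y]
    rw [NNReal.rpow_one]
  calc ∑ i ∈ s, x i ^ q ≤ ∑ i ∈ s, (∑ j ∈ s, x j) ^ (q - 1) * x i := by
        refine Finset.sum_le_sum fun i hi => ?_
        rw [key]
        exact mul_le_mul_left (NNReal.rpow_le_rpow
          (Finset.single_le_sum (fun j _ => zero_le) hi) (by linarith)) _
    _ = (∑ j ∈ s, x j) ^ (q - 1) * ∑ i ∈ s, x i := by rw [← Finset.mul_sum]
    _ = (∑ j ∈ s, x j) ^ q := (key _).symm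

lemma aux_piLp_norm_le (p : ℝ≥0∞) [Fact (1 ≤ p)] {L : ℕ} (hL : 1 ≤ L) (u : Fin L → ℂ) :
    ‖(WithLp.equiv p (Fin L → ℂ)).symm u‖ ≤
      max 1 ((L : ℝ) ^ (1 / p.toReal - 1 / 2)) * ‖(WithLp.equiv 2 (Fin L → ℂ)).symm u‖ := by
  haveI : Nonempty (Fin L) := Fin.pos_iff_nonempty.mp hL
  have hmax : (max 1 ((L : ℝ) ^ (1 / p.toReal - 1 / 2)))
      = ((max 1 ((L : ℝ≥0) ^ (1 / p.toReal - 1 / 2)) : ℝ≥0) : ℝ) := by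
    push_cast [NNReal.coe_rpow]
    rfl
  rw [hmax]
  have h2 : ‖(WithLp.equiv 2 (Fin L → ℂ)).symm u‖₊
      = (∑ i, ‖u i‖₊ ^ (2 : ℝ)) ^ (1 / 2 : ℝ) := by
    rw [PiLp.nnnorm_eq_sum (by norm_num : (2 : ℝ≥0∞) ≠ ∞)]
    norm_num
  -- coordinatewise bound
  have hcoord : ∀ i, ‖u i‖₊ ≤ ‖(WithLp.equiv 2 (Fin L → ℂ)).symm u‖₊ := by
    intro i
    rw [h2]
    have h1 : ‖u i‖₊ ^ (2:ℝ) ≤ ∑ j, ‖u j‖₊ ^ (2:ℝ) :=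
      Finset.single_le_sum (f := fun j => ‖u j‖₊ ^ (2:ℝ)) (fun j _ => zero_le)
        (Finset.mem_univ i)
    calc ‖u i‖₊ = (‖u i‖₊ ^ (2:ℝ)) ^ (1/2:ℝ) := by
          rw [← NNReal.rpow_mul]; norm_num
      _ ≤ _ := NNReal.rpow_le_rpow h1 (by norm_num)
  rcases eq_or_ne p ∞ with hp | hp
  · subst hp
    calc ‖(WithLp.equiv ⊤ (Fin L → ℂ)).symm u‖ = ⨆ i, ‖u i‖ := PiLp.norm_eq_ciSup _
      _ ≤ ‖(WithLp.equiv 2 (Fin L → ℂ)).symm u‖ := by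
          refine ciSup_le fun i => ?_
          exact_mod_cast hcoord i
      _ ≤ _ := le_mul_of_one_le_left (norm_nonneg _)
          (by exact_mod_cast (le_max_left 1 ((L : ℝ≥0) ^ (1 / (⊤:ℝ≥0∞).toReal - 1 / 2))))
  · -- finite p
    have hr1 : 1 ≤ p.toReal := by
      have := ENNReal.toReal_mono hp (Fact.out : (1:ℝ≥0∞) ≤ p)
      simpa using this
    have hr0 : (0:ℝ) < p.toReal := by linarith
    set r := p.toReal with hrdef
    have hnorm : ‖(WithLp.equiv p (Fin L → ℂ)).symm u‖₊ = (∑ i, ‖u i‖₊ ^ r) ^ (1 / r) :=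
      PiLp.nnnorm_eq_sum hp _
    rw [← coe_nnnorm ((WithLp.equiv p (Fin L → ℂ)).symm u),
      ← coe_nnnorm ((WithLp.equiv 2 (Fin L → ℂ)).symm u), ← NNReal.coe_mul,
      NNReal.coe_le_coe]
    rcases le_total 2 r with h2r | h2r
    · -- 2 ≤ r : ‖·‖_p ≤ ‖·‖_2
      refine le_trans ?_ (le_mul_of_one_le_left (zero_le) (le_max_left _ _))
      rw [hnorm, h2]
      have key : ∑ i, ‖u i‖₊ ^ r ≤ (∑ i, ‖u i‖₊ ^ (2:ℝ)) ^ (r / 2) := by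
        have e1 : ∀ i : Fin L, ‖u i‖₊ ^ r = (‖u i‖₊ ^ (2:ℝ)) ^ (r / 2) := fun i => by
          rw [← NNReal.rpow_mul]
          congr 1
          field_simp
        calc ∑ i, ‖u i‖₊ ^ r = ∑ i, (‖u i‖₊ ^ (2:ℝ)) ^ (r / 2) := by
              exact Finset.sum_congr rfl fun i _ => e1 i
          _ ≤ _ := aux_sum_rpow_le _ _ (by linarith)
      calc (∑ i, ‖u i‖₊ ^ r) ^ (1 / r)
          ≤ ((∑ i, ‖u i‖₊ ^ (2:ℝ)) ^ (r / 2)) ^ (1 / r) :=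
            NNReal.rpow_le_rpow key (by positivity)
        _ = (∑ i, ‖u i‖₊ ^ (2:ℝ)) ^ (1 / 2 : ℝ) := by
            rw [← NNReal.rpow_mul]
            congr 1
            field_simp
    · -- r ≤ 2 : power mean
      have h21 : 1 ≤ 2 / r := (one_le_div hr0).mpr h2r
      have key := NNReal.rpow_sum_le_const_mul_sum_rpow Finset.univ
        (fun i => ‖u i‖₊ ^ r) h21
      have e2 : ∀ i : Fin L, (‖u i‖₊ ^ r) ^ (2 / r) = ‖u i‖₊ ^ (2:ℝ) := fun i => by
        rw [← NNReal.rpow_mul]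
        congr 1
        field_simp
      simp only [Finset.card_univ, Fintype.card_fin, e2] at key
      have step : ‖(WithLp.equiv p (Fin L → ℂ)).symm u‖₊ ≤
          ((L:ℝ≥0) ^ (2 / r - 1) * ∑ i, ‖u i‖₊ ^ (2:ℝ)) ^ (1 / 2 : ℝ) := by
        rw [hnorm]
        have : (∑ i, ‖u i‖₊ ^ r) ^ (1 / r) = ((∑ i, ‖u i‖₊ ^ r) ^ (2 / r)) ^ (1 / 2 : ℝ) := by
          rw [← NNReal.rpow_mul]
          congr 1
          field_simp
        rw [this]
        exact NNReal.rpow_le_rpow key (by positivity)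
      refine step.trans ?_
      rw [NNReal.mul_rpow, ← NNReal.rpow_mul, ← h2]
      have harith : (2 / r - 1) * (1 / 2 : ℝ) = 1 / r - 1 / 2 := by ring
      rw [harith]
      exact mul_le_mul_left (le_max_right _ _) _

variable {d : ℕ}

lemma aux_conv_aesm {f g : EuclideanSpace ℝ (Fin d) → ℂ}
    (hf : AEStronglyMeasurable f volume) (hg : AEStronglyMeasurable g volume) :
    AEStronglyMeasurable (MeasureTheory.convolution f g (ContinuousLinearMap.mul ℂ ℂ) volume)
      volume := by
  have h := hf.convolution_integrand (L := ContinuousLinearMap.mul ℂ ℂ) hg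
  exact h.integral_prod_right'

lemma aux_ae_conv_exists {f g : EuclideanSpace ℝ (Fin d) → ℂ}
    (hf : MemLp f 2 volume) (hg : Integrable g volume) :
    ∀ᵐ x ∂(volume : Measure (EuclideanSpace ℝ (Fin d))),
      ConvolutionExistsAt f g x (ContinuousLinearMap.mul ℂ ℂ) volume := by
  have hfm := hf.aestronglyMeasurable
  have hgm := hg.aestronglyMeasurable
  have hslice : ∀ x : EuclideanSpace ℝ (Fin d),
      AEStronglyMeasurable (fun t => f t * g (x - t)) volume := by
    intro x
    have hmap : Measure.map (fun t => x - t)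
        (volume : Measure (EuclideanSpace ℝ (Fin d))) = volume :=
      Measure.map_sub_left_eq_self volume x
    have := AEStronglyMeasurable.convolution_integrand_snd'
      (L := ContinuousLinearMap.mul ℂ ℂ) hfm (x := x) (by rw [hmap]; exact hgm)
    simpa using this
  have hf2 : Integrable (fun t => ‖f t‖ ^ (2:ℕ)) volume := by
    have := hf.integrable_norm_rpow (by norm_num) (by norm_num)
    have h2 : (2 : ℝ≥0∞).toReal = (2:ℝ) := by norm_num
    rw [h2] at this
    refine this.congr (Filter.Eventually.of_forall fun t => ?_)
    show ‖f t‖ ^ (2:ℝ) = ‖f t‖ ^ (2:ℕ)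
    rw [← Real.rpow_natCast ‖f t‖ 2]
    norm_num
  have hkey := hf2.ae_convolution_exists (L := ContinuousLinearMap.mul ℝ ℝ)
    (μ := volume) (ν := volume) hg.norm
  filter_upwards [hkey] with x hx
  have hb1 : Integrable (fun t => ‖f t‖ ^ (2:ℕ) * ‖g (x - t)‖) volume := by
    simpa using hx.integrable
  have hb2 : Integrable (fun t => ‖g (x - t)‖) volume := by
    have : Integrable (fun t => g (x - t)) volume :=
      (integrable_comp_sub_left g x).mpr hg
    exact this.norm
  refine Integrable.mono' (((hb1.add hb2).div_const 2)) ?_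
    (Filter.Eventually.of_forall fun t => ?_)
  · simpa using hslice x
  · simp only [ContinuousLinearMap.mul_apply', norm_mul, Pi.add_apply]
    have h1 : (0:ℝ) ≤ ‖g (x - t)‖ := norm_nonneg _
    nlinarith [sq_nonneg (‖f t‖ - 1)]

lemma aux_sq_eLpNorm {α : Type*} [MeasurableSpace α] {μ : Measure α} {E : Type*}
    [NormedAddCommGroup E] (f : α → E) :
    eLpNorm f 2 μ ^ 2 = ∫⁻ x, (‖f x‖₊ : ℝ≥0∞) ^ 2 ∂μ := by
  rw [eLpNorm_eq_lintegral_rpow_enorm_toReal two_ne_zero ENNReal.ofNat_ne_top]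
  have h2 : (2 : ℝ≥0∞).toReal = (2 : ℝ) := by norm_num
  rw [h2]
  have hsq : ∀ a : ℝ≥0∞, (a ^ (1 / 2 : ℝ)) ^ (2 : ℕ) = a := fun a => by
    rw [← ENNReal.rpow_natCast (a ^ (1 / 2 : ℝ)) 2, ← ENNReal.rpow_mul]
    norm_num
  rw [hsq]
  refine lintegral_congr fun x => ?_
  rw [← ENNReal.rpow_natCast (‖f x‖₊ : ℝ≥0∞) 2]
  norm_num
  rfl

end Aux

/-- Lipschitz estimate for aggregation of filters by a pointwise p-norm (Lemma 3.1). -/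
theorem stmt_2 (d L : ℕ) (p : ENNReal) [Fact (1 ≤ p)]
    (g f h : Fin L → EuclideanSpace ℝ (Fin d) → ℂ)
    (hg : ∀ l, Integrable (g l)) (hf : ∀ l, MemLp (f l) 2 volume)
    (hh : ∀ l, MemLp (h l) 2 volume)
    (F H : EuclideanSpace ℝ (Fin d) → ℝ)
    (hF : F = fun x => ‖(WithLp.equiv p (Fin L → ℂ)).symm (fun l => conv (f l) (g l) x)‖)
    (hH : H = fun x => ‖(WithLp.equiv p (Fin L → ℂ)).symm (fun l => conv (h l) (g l) x)‖) :
    eLpNorm (F - H) 2 volume ^ 2 ≤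
      ENNReal.ofReal (max 1 ((L : ℝ) ^ (2 / p.toReal - 1))) *
        ∑ l, eLpNorm (conv (f l - h l) (g l)) 2 volume ^ 2 := by
  rcases Nat.eq_zero_or_pos L with hL0 | hLpos
  · subst hL0
    have hFH : F = H := by
      rw [hF, hH]
      funext x
      congr 1
      congr 1
      funext l
      exact l.elim0
    rw [hFH, sub_self]
    simp [eLpNorm_zero]
  · have hL : 1 ≤ L := hLpos
    set C : ℝ := max 1 ((L : ℝ) ^ (1 / p.toReal - 1 / 2)) with hCdef
    have hC0 : 0 ≤ C := le_trans zero_le_one (le_max_left _ _)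
    have hconst : ENNReal.ofReal C ^ 2
        = ENNReal.ofReal (max 1 ((L : ℝ) ^ (2 / p.toReal - 1))) := by
      rw [← ENNReal.ofReal_pow hC0]
      congr 1
      have hx0 : (0:ℝ) ≤ (L : ℝ) ^ (1 / p.toReal - 1 / 2) :=
        Real.rpow_nonneg (Nat.cast_nonneg L) _
      have hsq : ((L : ℝ) ^ (1 / p.toReal - 1 / 2)) ^ (2:ℕ)
          = (L : ℝ) ^ (2 / p.toReal - 1) := by
        rw [← Real.rpow_natCast ((L : ℝ) ^ (1 / p.toReal - 1 / 2)) 2,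
          ← Real.rpow_mul (Nat.cast_nonneg L)]
        congr 1
        push_cast
        ring
      rcases le_total ((L : ℝ) ^ (1 / p.toReal - 1 / 2)) 1 with hc | hc
      · rw [hCdef, max_eq_left hc, one_pow, eq_comm, max_eq_left]
        rw [← hsq]
        exact pow_le_one₀ hx0 hc
      · rw [hCdef, max_eq_right hc, hsq, eq_comm, max_eq_right]
        rw [← hsq]
        nlinarith
    have hae : ∀ᵐ x ∂(volume : Measure (EuclideanSpace ℝ (Fin d))),
        (‖F x - H x‖₊ : ℝ≥0∞) ^ 2 ≤
          ENNReal.ofReal C ^ 2 * ∑ l, (‖conv (f l - h l) (g l) x‖₊ : ℝ≥0∞) ^ 2 := by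
      have hall : ∀ᵐ x ∂(volume : Measure (EuclideanSpace ℝ (Fin d))), ∀ l : Fin L,
          ConvolutionExistsAt (f l) (g l) x (ContinuousLinearMap.mul ℂ ℂ) volume ∧
          ConvolutionExistsAt (h l) (g l) x (ContinuousLinearMap.mul ℂ ℂ) volume := by
        rw [ae_all_iff]
        intro l
        filter_upwards [aux_ae_conv_exists (hf l) (hg l), aux_ae_conv_exists (hh l) (hg l)]
          with x h1 h2
        exact ⟨h1, h2⟩
      filter_upwards [hall] with x hx
      have hsub : ∀ l : Fin L,
          conv (f l) (g l) x - conv (h l) (g l) x = conv (f l - h l) (g l) x := by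
        intro l
        simp only [conv, MeasureTheory.convolution_def]
        rw [← integral_sub (hx l).1 (hx l).2]
        congr 1
        funext t
        simp [sub_mul]
      have hre : |F x - H x| ≤
          C * ‖(WithLp.equiv 2 (Fin L → ℂ)).symm (fun l => conv (f l - h l) (g l) x)‖ := by
        simp only [hF, hH]
        refine le_trans (abs_norm_sub_norm_le _ _) ?_
        rw [WithLp.equiv_symm_apply, ← WithLp.toLp_sub]
        have he : ((fun l => conv (f l) (g l) x) - fun l => conv (h l) (g l) x)
            = fun l => conv (f l - h l) (g l) x := by
          funext l
          exact hsub l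
        rw [he]
        exact aux_piLp_norm_le p hL _
      calc (‖F x - H x‖₊ : ℝ≥0∞) ^ 2 = ENNReal.ofReal |F x - H x| ^ 2 := by
            rw [← Real.norm_eq_abs, ofReal_norm, enorm_eq_nnnorm]
        _ ≤ ENNReal.ofReal (C *
              ‖(WithLp.equiv 2 (Fin L → ℂ)).symm (fun l => conv (f l - h l) (g l) x)‖) ^ 2 := by
            gcongr
        _ = ENNReal.ofReal C ^ 2 *
              ∑ l, (‖conv (f l - h l) (g l) x‖₊ : ℝ≥0∞) ^ 2 := by
            rw [ENNReal.ofReal_mul hC0, mul_pow]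
            congr 1
            rw [ofReal_norm, enorm_eq_nnnorm, ← ENNReal.coe_pow]
            have : ‖(WithLp.equiv 2 (Fin L → ℂ)).symm (fun l => conv (f l - h l) (g l) x)‖₊ ^ 2
                = ∑ l, ‖conv (f l - h l) (g l) x‖₊ ^ 2 := by
              rw [EuclideanSpace.nnnorm_eq]
              rw [NNReal.sq_sqrt]
              rfl
            rw [this]
            push_cast
            rfl
    have hwm : ∀ l : Fin L,
        AEMeasurable (fun x => (‖conv (f l - h l) (g l) x‖₊ : ℝ≥0∞) ^ 2) volume := fun l =>
      ((aux_conv_aesm ((hf l).sub (hh l)).aestronglyMeasurable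
        (hg l).aestronglyMeasurable).enorm.pow_const 2)
    calc eLpNorm (F - H) 2 volume ^ 2
        = ∫⁻ x, (‖F x - H x‖₊ : ℝ≥0∞) ^ 2 := by
          rw [aux_sq_eLpNorm]
          exact lintegral_congr fun x => by rw [Pi.sub_apply]
      _ ≤ ∫⁻ x, ENNReal.ofReal C ^ 2 * ∑ l, (‖conv (f l - h l) (g l) x‖₊ : ℝ≥0∞) ^ 2 :=
          lintegral_mono_ae hae
      _ = ENNReal.ofReal C ^ 2 * ∑ l, ∫⁻ x, (‖conv (f l - h l) (g l) x‖₊ : ℝ≥0∞) ^ 2 := by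
          rw [lintegral_const_mul' _ _ (pow_ne_top ENNReal.ofReal_ne_top),
            lintegral_finset_sum' _ (fun l _ => hwm l)]
      _ = ENNReal.ofReal C ^ 2 * ∑ l, eLpNorm (conv (f l - h l) (g l)) 2 volume ^ 2 := by
          congr 1
          exact Finset.sum_congr rfl fun l _ => (aux_sq_eLpNorm _).symm
      _ = _ := by rw [hconst]

end
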